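/- arXiv:2003.06565 — 6 statements merged into one kernel-verified Lean document; each statement's English description precedes it below -/
import Mathlib

section
/- Let V be a 4-dimensional real vector space with two nondegenerate alternating bilinear forms ω₁, ω₂, and let A be the connecting automorphism (ω₁(u, Av) = ω₂(u, v)). Suppose A has no real eigenvalue. If W ⊆ V is a 2-dimensional subspace that is isotropic for both ω₁ and ω₂, then A(W) = W. -/
/-- In a 4-dimensional space, a 2-dimensional subspace isotropic for
both nondegenerate alternating forms is invariant under the connecting automorphism
`A` (which has no real eigenvalue). -/
theorem stmt_3 (V : Type*) [AddCommGroup V] [Module ℝ V] [FiniteDimensional ℝ V]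
    (hdim : Module.finrank ℝ V = 4)
    (ω₁ ω₂ : V →ₗ[ℝ] V →ₗ[ℝ] ℝ)
    (h₁alt : ∀ v, ω₁ v v = 0) (h₂alt : ∀ v, ω₂ v v = 0)
    (h₁nd : LinearMap.BilinForm.Nondegenerate ω₁)
    (h₂nd : LinearMap.BilinForm.Nondegenerate ω₂)
    (A : V ≃ₗ[ℝ] V) (hA : ∀ u v, ω₁ u (A v) = ω₂ u v)
    (hAeig : ∀ (c : ℝ) (v : V), A v = c • v → v = 0)
    (W : Submodule ℝ V) (hW : Module.finrank ℝ W = 2)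
    (hiso₁ : ∀ u ∈ W, ∀ v ∈ W, ω₁ u v = 0)
    (hiso₂ : ∀ u ∈ W, ∀ v ∈ W, ω₂ u v = 0) :
    W.map (A : V →ₗ[ℝ] V) = W := by
  have hrefl : ω₁.IsRefl := LinearMap.IsAlt.isRefl h₁alt
  have horth : LinearMap.BilinForm.orthogonal ω₁ W = W := by
    refine (Submodule.eq_of_le_of_finrank_le (fun w hw => ?_) ?_).symm
    · exact fun u hu => hiso₁ u hu w hw
    rw [LinearMap.BilinForm.finrank_orthogonal h₁nd, hdim, hW]
  have hle : W.map (A : V →ₗ[ℝ] V) ≤ W := by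
    rintro _ ⟨w, hw, rfl⟩
    rw [← horth]
    intro u hu
    have : (ω₁ u) (A w) = 0 := by rw [hA]; exact hiso₂ u hu w hw
    simpa [LinearMap.BilinForm.isOrtho_def] using this
  apply Submodule.eq_of_le_of_finrank_le hle
  rw [LinearEquiv.finrank_map_eq]
end

section
/- Let V be a 4-dimensional real vector space with two nondegenerate alternating bilinear forms ω₁, ω₂ and connecting automorphism A having no real eigenvalue. If W is a 2-dimensional subspace of V isotropic for both forms, then W^{⊥₁} ∩ W^{⊥₂} = W. -/
/-- In a 4-dimensional space with connecting automorphism `A` without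
real eigenvalues, a 2-dimensional common isotropic subspace `W` satisfies
`W^{⊥₁} ∩ W^{⊥₂} = W`. -/
theorem stmt_4 (V : Type*) [AddCommGroup V] [Module ℝ V] [FiniteDimensional ℝ V]
    (hdim : Module.finrank ℝ V = 4)
    (ω₁ ω₂ : V →ₗ[ℝ] V →ₗ[ℝ] ℝ)
    (h₁alt : ∀ v, ω₁ v v = 0) (h₂alt : ∀ v, ω₂ v v = 0)
    (h₁nd : LinearMap.BilinForm.Nondegenerate ω₁)
    (h₂nd : LinearMap.BilinForm.Nondegenerate ω₂)
    (A : V ≃ₗ[ℝ] V) (hA : ∀ u v, ω₁ u (A v) = ω₂ u v)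
    (hAeig : ∀ (c : ℝ) (v : V), A v = c • v → v = 0)
    (W : Submodule ℝ V) (hW : Module.finrank ℝ W = 2)
    (hiso₁ : ∀ u ∈ W, ∀ v ∈ W, ω₁ u v = 0)
    (hiso₂ : ∀ u ∈ W, ∀ v ∈ W, ω₂ u v = 0) :
    LinearMap.BilinForm.orthogonal ω₁ W ⊓ LinearMap.BilinForm.orthogonal ω₂ W = W := by
  have hr₁ : LinearMap.BilinForm.IsRefl ω₁ := LinearMap.IsAlt.isRefl h₁alt
  have hle₁ : W ≤ LinearMap.BilinForm.orthogonal ω₁ W := fun v hv u hu => hiso₁ u hu v hv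
  have heq₁ : LinearMap.BilinForm.orthogonal ω₁ W = W := by
    apply (Submodule.eq_of_le_of_finrank_le hle₁ _).symm
    rw [LinearMap.BilinForm.finrank_orthogonal h₁nd W, hdim, hW]
  have hr₂ : LinearMap.BilinForm.IsRefl ω₂ := LinearMap.IsAlt.isRefl h₂alt
  have hle₂ : W ≤ LinearMap.BilinForm.orthogonal ω₂ W := fun v hv u hu => hiso₂ u hu v hv
  have heq₂ : LinearMap.BilinForm.orthogonal ω₂ W = W := by
    apply (Submodule.eq_of_le_of_finrank_le hle₂ _).symm
    rw [LinearMap.BilinForm.finrank_orthogonal h₂nd W, hdim, hW]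
  rw [heq₁, heq₂, inf_idem]
end

section
/- Let V be a finite-dimensional real vector space with two nondegenerate alternating bilinear forms ω₁, ω₂ and connecting automorphism A (ω₁(u, Av) = ω₂(u, v)). Then the following are equivalent: (i) for every nonzero v ∈ V, the map u ↦ (ω₁(v,u), ω₂(v,u)) from V to ℝ² is surjective; (ii) A has no real eigenvalue. -/
/-- Fatness criterion: for every nonzero `v` the map
`u ↦ (ω₁ v u, ω₂ v u)` is surjective onto `ℝ²` iff the connecting automorphism `A`
has no real eigenvalue. -/
theorem stmt_7 (V : Type*) [AddCommGroup V] [Module ℝ V] [FiniteDimensional ℝ V]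
    (ω₁ ω₂ : V →ₗ[ℝ] V →ₗ[ℝ] ℝ)
    (h₁alt : ∀ v, ω₁ v v = 0) (h₂alt : ∀ v, ω₂ v v = 0)
    (h₁nd : LinearMap.BilinForm.Nondegenerate ω₁)
    (h₂nd : LinearMap.BilinForm.Nondegenerate ω₂)
    (A : V ≃ₗ[ℝ] V) (hA : ∀ u v, ω₁ u (A v) = ω₂ u v) :
    (∀ v : V, v ≠ 0 → Function.Surjective (fun u : V => ((ω₁ v u, ω₂ v u) : ℝ × ℝ))) ↔
      (∀ (c : ℝ) (v : V), A v = c • v → v = 0) := by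
  have hskew1 : ∀ a b, ω₁ a b = -ω₁ b a := by
    intro a b
    have h := h₁alt (a + b)
    simp only [map_add, LinearMap.add_apply, h₁alt] at h
    linarith
  have hskew2 : ∀ a b, ω₂ a b = -ω₂ b a := by
    intro a b
    have h := h₂alt (a + b)
    simp only [map_add, LinearMap.add_apply, h₂alt] at h
    linarith
  constructor
  · intro hsurj c v hv
    by_contra hv0
    obtain ⟨u, hu⟩ := hsurj v hv0 ((0 : ℝ), (1 : ℝ))
    have hu1 : ω₁ v u = 0 := congrArg Prod.fst hu
    have hu2 : ω₂ v u = 1 := congrArg Prod.snd hu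
    have : ω₂ v u = c * ω₁ v u := by
      rw [hskew2 v u, ← hA u v, hv]
      simp only [map_smul, smul_eq_mul]
      rw [hskew1 u v]; ring
    rw [hu1, hu2] at this
    simp at this
  · intro heig v hv p
    by_contra hp
    set L : V →ₗ[ℝ] ℝ × ℝ := (ω₁ v).prod (ω₂ v) with hL
    have hpn : p ∉ LinearMap.range L := by
      rintro ⟨u, hu⟩
      exact hp ⟨u, hu⟩
    obtain ⟨f, hfp, hfmap⟩ :=
      Submodule.exists_dual_map_eq_bot_of_notMem hpn inferInstance
    set a : ℝ := f (1, 0) with ha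
    set b : ℝ := f (0, 1) with hb
    have hf : ∀ z : ℝ × ℝ, f z = z.1 * a + z.2 * b := by
      intro z
      have : z = z.1 • ((1 : ℝ), (0 : ℝ)) + z.2 • ((0 : ℝ), (1 : ℝ)) := by
        simp [Prod.ext_iff]
      rw [this, map_add, map_smul, map_smul]
      simp [ha, hb, mul_comm]
    have hker : ∀ u : V, a * ω₁ v u + b * ω₂ v u = 0 := by
      intro u
      have h0 : f (L u) = 0 := by
        have : f (L u) ∈ (LinearMap.range L).map f :=
          Submodule.mem_map_of_mem (LinearMap.mem_range_self L u)
        rw [hfmap] at this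
        simpa using this
      rw [hf (L u)] at h0
      simp only [hL, LinearMap.prod_apply, Pi.prod, Function.prod] at h0
      linarith
    have hab : a ≠ 0 ∨ b ≠ 0 := by
      by_contra hc
      push_neg at hc
      apply hfp
      rw [hf p, hc.1, hc.2]; ring
    set T : V →ₗ[ℝ] V := a • LinearMap.id + b • (A : V →ₗ[ℝ] V) with hT
    have hTinj : Function.Injective T := by
      rw [← LinearMap.ker_eq_bot, Submodule.eq_bot_iff]
      intro u hu
      rw [LinearMap.mem_ker, hT] at hu
      simp only [LinearMap.add_apply, LinearMap.smul_apply, LinearMap.id_apply,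
        LinearMap.coe_coe] at hu
      by_cases hb0 : b = 0
      · have ha0 : a ≠ 0 := by tauto
        rw [hb0, zero_smul, add_zero] at hu
        exact (smul_eq_zero.mp hu).resolve_left ha0
      · have h1 : b • (A u) = (-a) • u := by
          rw [neg_smul, ← neg_smul a u] at *
          rw [add_comm] at hu
          exact eq_neg_of_add_eq_zero_left hu ▸ by rw [← neg_smul]
        have hAu : A u = (-(a / b)) • u := by
          have h2 : A u = b⁻¹ • ((-a) • u) := by
            rw [← h1, smul_smul, inv_mul_cancel₀ hb0, one_smul]
          rw [h2, smul_smul]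
          congr 1
          field_simp
        exact heig _ u hAu
    have hTsurj : Function.Surjective T := LinearMap.injective_iff_surjective.mp hTinj
    have hvanish : ∀ w : V, ω₁ v w = 0 := by
      intro w
      obtain ⟨u, hu⟩ := hTsurj w
      rw [← hu, hT]
      simp only [LinearMap.add_apply, LinearMap.smul_apply, LinearMap.id_apply,
        LinearMap.coe_coe, LinearEquiv.coe_coe, map_add, map_smul, smul_eq_mul]
      rw [hA v u]
      exact hker u
    exact hv (h₁nd.1 v hvanish)
end

section
/- On ℝ⁶ with coordinates as above, let D = ker α₁ ∩ ker α₂ with α₁ = dz₁ - (y₁₁ dx₁₁ - y₁₂ dx₁₂), α₂ = dz₂ - (y₁₂ dx₁₁ + y₁₁ dx₁₂), and let ωᵢ = dαᵢ|_D. The connecting automorphism A : D → D defined by ω₁(u, Av) = ω₂(u, v) satisfies A² = -Id on D. -/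
/-- `α₁ = dz₁ - (y₁₁ dx₁₁ - y₁₂ dx₁₂)` at `m ∈ ℝ⁶`; coordinates
`(x₁₁, x₁₂, y₁₁, y₁₂, z₁, z₂)`. -/
noncomputable def alpha1 (m : Fin 6 → ℝ) : (Fin 6 → ℝ) →ₗ[ℝ] ℝ :=
  (LinearMap.proj 4 : (Fin 6 → ℝ) →ₗ[ℝ] ℝ) -
    (m 2 • (LinearMap.proj 0 : (Fin 6 → ℝ) →ₗ[ℝ] ℝ) -
      m 3 • (LinearMap.proj 1 : (Fin 6 → ℝ) →ₗ[ℝ] ℝ))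

/-- `α₂ = dz₂ - (y₁₂ dx₁₁ + y₁₁ dx₁₂)` at `m ∈ ℝ⁶`. -/
noncomputable def alpha2 (m : Fin 6 → ℝ) : (Fin 6 → ℝ) →ₗ[ℝ] ℝ :=
  (LinearMap.proj 5 : (Fin 6 → ℝ) →ₗ[ℝ] ℝ) -
    (m 3 • (LinearMap.proj 0 : (Fin 6 → ℝ) →ₗ[ℝ] ℝ) +
      m 2 • (LinearMap.proj 1 : (Fin 6 → ℝ) →ₗ[ℝ] ℝ))

/-- `dα₁ = -(dy₁₁ ∧ dx₁₁ - dy₁₂ ∧ dx₁₂)`. -/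
def dalpha1 (u v : Fin 6 → ℝ) : ℝ :=
  -((u 2 * v 0 - u 0 * v 2) - (u 3 * v 1 - u 1 * v 3))

/-- `dα₂ = -(dy₁₂ ∧ dx₁₁ + dy₁₁ ∧ dx₁₂)`. -/
def dalpha2 (u v : Fin 6 → ℝ) : ℝ :=
  -((u 3 * v 0 - u 0 * v 3) + (u 2 * v 1 - u 1 * v 2))

/-- The connecting automorphism `A` of the fiber
`D_m = ker α₁ ∩ ker α₂`, characterized by `ω₁(u, A v) = ω₂(u, v)` with
`ωᵢ = dαᵢ|_D`, satisfies `A² = -Id` on `D_m`. -/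
theorem stmt_13 (m : Fin 6 → ℝ)
    (A : ↥(LinearMap.ker (alpha1 m) ⊓ LinearMap.ker (alpha2 m)) →ₗ[ℝ]
      ↥(LinearMap.ker (alpha1 m) ⊓ LinearMap.ker (alpha2 m)))
    (hA : ∀ u v : ↥(LinearMap.ker (alpha1 m) ⊓ LinearMap.ker (alpha2 m)),
      dalpha1 (u : Fin 6 → ℝ) ((A v : Fin 6 → ℝ)) = dalpha2 (u : Fin 6 → ℝ) (v : Fin 6 → ℝ)) :
    ∀ v, A (A v) = -v := by
  intro v
  have hcoord : ∀ w : ↥(LinearMap.ker (alpha1 m) ⊓ LinearMap.ker (alpha2 m)),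
      (w : Fin 6 → ℝ) 4 = m 2 * (w : Fin 6 → ℝ) 0 - m 3 * (w : Fin 6 → ℝ) 1 ∧
      (w : Fin 6 → ℝ) 5 = m 3 * (w : Fin 6 → ℝ) 0 + m 2 * (w : Fin 6 → ℝ) 1 := by
    intro w
    obtain ⟨h1, h2⟩ := w.2
    simp only [SetLike.mem_coe, LinearMap.mem_ker, alpha1, alpha2, LinearMap.sub_apply,
      LinearMap.add_apply, LinearMap.smul_apply, LinearMap.proj_apply, smul_eq_mul] at h1 h2
    constructor <;> linarith
  have hmemD : ∀ u : Fin 6 → ℝ,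
      u 4 = m 2 * u 0 - m 3 * u 1 → u 5 = m 3 * u 0 + m 2 * u 1 →
      u ∈ LinearMap.ker (alpha1 m) ⊓ LinearMap.ker (alpha2 m) := by
    intro u h4 h5
    refine ⟨?_, ?_⟩ <;>
      simp only [SetLike.mem_coe, LinearMap.mem_ker, alpha1, alpha2, LinearMap.sub_apply,
        LinearMap.add_apply, LinearMap.smul_apply, LinearMap.proj_apply, smul_eq_mul] <;>
      linarith
  have he0 : (![1, 0, 0, 0, m 2, m 3] : Fin 6 → ℝ) ∈
      LinearMap.ker (alpha1 m) ⊓ LinearMap.ker (alpha2 m) := by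
    apply hmemD <;>
      norm_num [show (![1, 0, 0, 0, m 2, m 3] : Fin 6 → ℝ) 5 = m 3 from rfl, show (![1, 0, 0, 0, m 2, m 3] : Fin 6 → ℝ) 4 = m 2 from rfl]
  have he1 : (![0, 1, 0, 0, -(m 3), m 2] : Fin 6 → ℝ) ∈
      LinearMap.ker (alpha1 m) ⊓ LinearMap.ker (alpha2 m) := by
    apply hmemD <;>
      norm_num [show (![0, 1, 0, 0, -(m 3), m 2] : Fin 6 → ℝ) 5 = m 2 from rfl, show (![0, 1, 0, 0, -(m 3), m 2] : Fin 6 → ℝ) 4 = -(m 3) from rfl]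
  have he2 : (![0, 0, 1, 0, 0, 0] : Fin 6 → ℝ) ∈
      LinearMap.ker (alpha1 m) ⊓ LinearMap.ker (alpha2 m) := by
    apply hmemD <;>
      norm_num [show (![0, 0, 1, 0, 0, 0] : Fin 6 → ℝ) 5 = 0 from rfl, show (![0, 0, 1, 0, 0, 0] : Fin 6 → ℝ) 4 = 0 from rfl]
  have he3 : (![0, 0, 0, 1, 0, 0] : Fin 6 → ℝ) ∈
      LinearMap.ker (alpha1 m) ⊓ LinearMap.ker (alpha2 m) := by
    apply hmemD <;>
      norm_num [show (![0, 0, 0, 1, 0, 0] : Fin 6 → ℝ) 5 = 0 from rfl, show (![0, 0, 0, 1, 0, 0] : Fin 6 → ℝ) 4 = 0 from rfl]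
  have hJ : ∀ w : ↥(LinearMap.ker (alpha1 m) ⊓ LinearMap.ker (alpha2 m)),
      (A w : Fin 6 → ℝ) 0 = (w : Fin 6 → ℝ) 1 ∧
      (A w : Fin 6 → ℝ) 1 = -(w : Fin 6 → ℝ) 0 ∧
      (A w : Fin 6 → ℝ) 2 = (w : Fin 6 → ℝ) 3 ∧
      (A w : Fin 6 → ℝ) 3 = -(w : Fin 6 → ℝ) 2 := by
    intro w
    have h0 := hA ⟨_, he2⟩ w
    have h1 := hA ⟨_, he3⟩ w
    have h2 := hA ⟨_, he0⟩ w
    have h3 := hA ⟨_, he1⟩ w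
    simp only [dalpha1, dalpha2, Matrix.cons_val_zero, Matrix.cons_val_one, Matrix.head_cons,
      Matrix.cons_val_two, Matrix.tail_cons, Matrix.cons_val_three] at h0 h1 h2 h3
    refine ⟨by linarith, by linarith, by linarith, by linarith⟩
  obtain ⟨a0, a1, a2, a3⟩ := hJ v
  obtain ⟨b0, b1, b2, b3⟩ := hJ (A v)
  obtain ⟨c4, c5⟩ := hcoord (A (A v))
  obtain ⟨v4, v5⟩ := hcoord v
  have g0 : (A (A v) : Fin 6 → ℝ) 0 = -(v : Fin 6 → ℝ) 0 := by linarith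
  have g1 : (A (A v) : Fin 6 → ℝ) 1 = -(v : Fin 6 → ℝ) 1 := by linarith
  have g2 : (A (A v) : Fin 6 → ℝ) 2 = -(v : Fin 6 → ℝ) 2 := by linarith
  have g3 : (A (A v) : Fin 6 → ℝ) 3 = -(v : Fin 6 → ℝ) 3 := by linarith
  have g4 : (A (A v) : Fin 6 → ℝ) 4 = -(v : Fin 6 → ℝ) 4 := by
    rw [c4, g0, g1, v4]; ring
  have g5 : (A (A v) : Fin 6 → ℝ) 5 = -(v : Fin 6 → ℝ) 5 := by
    rw [c5, g0, g1, v5]; ring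
  apply Subtype.ext
  show (A (A v) : Fin 6 → ℝ) = ((-v : ↥(LinearMap.ker (alpha1 m) ⊓ LinearMap.ker (alpha2 m))) : Fin 6 → ℝ)
  have : ((-v : ↥(LinearMap.ker (alpha1 m) ⊓ LinearMap.ker (alpha2 m))) : Fin 6 → ℝ)
      = -(v : Fin 6 → ℝ) := rfl
  rw [this]
  funext i
  fin_cases i
  · exact g0
  · exact g1
  · exact g2
  · exact g3
  · exact g4
  · exact g5
end

section
/- On ℝ⁶, the distribution D = ker α₁ ∩ ker α₂ with α₁ = dz₁ - (y₁₁ dx₁₁ - y₁₂ dx₁₂), α₂ = dz₂ - (y₁₂ dx₁₁ + y₁₁ dx₁₂) is fat: for every point and every nonzero v in the fiber D_x, the linear map D_x → ℝ², u ↦ (dα₁(v, u), dα₂(v, u)), is surjective. -/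
/-- The distribution `D = ker α₁ ∩ ker α₂` on `ℝ⁶` is fat: for every
point `m` and every nonzero `v` in the fiber `D_m`, the map
`u ↦ (dα₁(v, u), dα₂(v, u))` from `D_m` to `ℝ²` is surjective. -/
theorem stmt_14 (m : Fin 6 → ℝ)
    (v : ↥(LinearMap.ker (alpha1 m) ⊓ LinearMap.ker (alpha2 m))) (hv : v ≠ 0) :
    Function.Surjective
      (fun u : ↥(LinearMap.ker (alpha1 m) ⊓ LinearMap.ker (alpha2 m)) =>
        ((dalpha1 (v : Fin 6 → ℝ) (u : Fin 6 → ℝ),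
          dalpha2 (v : Fin 6 → ℝ) (u : Fin 6 → ℝ)) : ℝ × ℝ)) := by

  intro p
  obtain ⟨a, b⟩ := p
  set V : Fin 6 → ℝ := (v : Fin 6 → ℝ) with hV
  have hv1 : alpha1 m V = 0 := v.2.1
  have hv2 : alpha2 m V = 0 := v.2.2
  simp only [alpha1, alpha2, LinearMap.sub_apply, LinearMap.add_apply,
    LinearMap.smul_apply, LinearMap.proj_apply, smul_eq_mul] at hv1 hv2
  -- not all of V 0, V 1, V 2, V 3 are zero
  have hne : ¬ (V 0 = 0 ∧ V 1 = 0 ∧ V 2 = 0 ∧ V 3 = 0) := by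
    rintro ⟨h0, h1, h2, h3⟩
    apply hv
    ext i
    fin_cases i <;>
      simp_all <;> linarith
  rcases Classical.em (V 0 = 0 ∧ V 1 = 0) with ⟨h0, h1⟩ | hx
  · -- use second pair: V 2 ^ 2 + V 3 ^ 2 ≠ 0
    have hr : V 2 ^ 2 + V 3 ^ 2 ≠ 0 := by
      intro h
      have h2 : V 2 = 0 := by nlinarith [sq_nonneg (V 2), sq_nonneg (V 3)]
      have h3 : V 3 = 0 := by nlinarith [sq_nonneg (V 2), sq_nonneg (V 3)]
      exact hne ⟨h0, h1, h2, h3⟩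
    set r : ℝ := V 2 ^ 2 + V 3 ^ 2 with hrdef
    set u0 : ℝ := -(a * V 2 + b * V 3) / r with hu0
    set u1 : ℝ := -(b * V 2 - a * V 3) / r with hu1
    refine ⟨⟨![u0, u1, 0, 0, m 2 * u0 - m 3 * u1, m 3 * u0 + m 2 * u1], ?_⟩, ?_⟩
    · constructor <;>
      · simp only [alpha1, alpha2, LinearMap.mem_ker, LinearMap.sub_apply,
          LinearMap.add_apply, LinearMap.smul_apply, LinearMap.proj_apply, smul_eq_mul]
        simp [show (5:Fin 6) = Fin.succ 4 from rfl, Matrix.cons_val_succ]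
        try ring
    · simp only [dalpha1, dalpha2]
      simp only [Matrix.cons_val_zero, Matrix.cons_val_one, Matrix.head_cons,
        Matrix.cons_val_succ, Matrix.cons_val_two, Matrix.cons_val_three, Matrix.tail_cons]
      refine Prod.ext ?_ ?_ <;>
      · simp only [hu0, hu1]
        field_simp
        ring
  · -- first pair: V 0 ^ 2 + V 1 ^ 2 ≠ 0
    have hr : V 0 ^ 2 + V 1 ^ 2 ≠ 0 := by
      intro h
      have h0 : V 0 = 0 := by nlinarith [sq_nonneg (V 0), sq_nonneg (V 1)]
      have h1 : V 1 = 0 := by nlinarith [sq_nonneg (V 0), sq_nonneg (V 1)]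
      exact hx ⟨h0, h1⟩
    set r : ℝ := V 0 ^ 2 + V 1 ^ 2 with hrdef
    set u2 : ℝ := (a * V 0 + b * V 1) / r with hu2
    set u3 : ℝ := (b * V 0 - a * V 1) / r with hu3
    refine ⟨⟨![0, 0, u2, u3, 0, 0], ?_⟩, ?_⟩
    · constructor <;>
      · simp only [alpha1, alpha2, LinearMap.mem_ker, LinearMap.sub_apply,
          LinearMap.add_apply, LinearMap.smul_apply, LinearMap.proj_apply, smul_eq_mul]
        simp [show (5:Fin 6) = Fin.succ 4 from rfl, Matrix.cons_val_succ]
    · simp only [dalpha1, dalpha2]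
      simp only [Matrix.cons_val_zero, Matrix.cons_val_one, Matrix.head_cons,
        Matrix.cons_val_succ, Matrix.cons_val_two, Matrix.cons_val_three, Matrix.tail_cons]
      refine Prod.ext ?_ ?_ <;>
      · simp only [hu2, hu3]
        field_simp
        ring
end

section
/- Let V be a finite-dimensional real vector space with two nondegenerate alternating bilinear forms ω₁, ω₂ and connecting automorphism A having no real eigenvalue. Then for every (c₁, c₂) ∈ ℝ² with (c₁, c₂) ≠ (0, 0), the alternating form c₁ω₁ + c₂ω₂ is nondegenerate on V. -/
/-- If the connecting automorphism `A` (with `ω₁ u (A v) = ω₂ u v`)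
has no real eigenvalue, then every nonzero linear combination `c₁ω₁ + c₂ω₂` is
nondegenerate. -/
theorem stmt_15 (V : Type*) [AddCommGroup V] [Module ℝ V] [FiniteDimensional ℝ V]
    (ω₁ ω₂ : V →ₗ[ℝ] V →ₗ[ℝ] ℝ)
    (h₁alt : ∀ v, ω₁ v v = 0) (h₂alt : ∀ v, ω₂ v v = 0)
    (h₁nd : LinearMap.BilinForm.Nondegenerate ω₁)
    (h₂nd : LinearMap.BilinForm.Nondegenerate ω₂)
    (A : V ≃ₗ[ℝ] V) (hA : ∀ u v, ω₁ u (A v) = ω₂ u v)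
    (hAeig : ∀ (c : ℝ) (v : V), A v = c • v → v = 0)
    (c₁ c₂ : ℝ) (hc : (c₁, c₂) ≠ (0, 0)) :
    LinearMap.BilinForm.Nondegenerate (c₁ • ω₁ + c₂ • ω₂) := by
  have hrefl : (c₁ • ω₁ + c₂ • ω₂).IsRefl :=
    LinearMap.IsAlt.isRefl (fun x => by simp [h₁alt, h₂alt])
  refine (LinearMap.IsRefl.nondegenerate_iff_separatingLeft hrefl).mpr ?_
  intro v hv
  simp only [LinearMap.add_apply, LinearMap.smul_apply, smul_eq_mul] at hv
  by_cases hc2 : c₂ = 0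
  · have hc1 : c₁ ≠ 0 := by
      intro h; exact hc (by simp [h, hc2])
    apply h₁nd.1 v
    intro u
    have := hv u
    rw [hc2] at this
    simpa [hc1] using this
  · set f : V →ₗ[ℝ] V := c₁ • LinearMap.id + c₂ • (A : V →ₗ[ℝ] V) with hf
    have hinj : Function.Injective f := by
      intro x y hxy
      rw [← sub_eq_zero] at hxy ⊢
      set z := x - y with hz
      have hz0 : f z = 0 := by rw [hz, map_sub]; exact hxy
      have : A z = (-(c₁ / c₂)) • z := by
        have : c₁ • z + c₂ • A z = 0 := by
          simpa [hf] using hz0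
        have h2 : c₂ • A z = -(c₁ • z) := by linear_combination (norm := module) this
        apply smul_right_injective V hc2
        show c₂ • A z = c₂ • ((-(c₁/c₂)) • z)
        rw [h2, smul_smul]
        match_scalars <;> field_simp <;> ring
      exact hAeig _ _ this
    have hsurj : Function.Surjective f :=
      (LinearMap.injective_iff_surjective).mp hinj
    apply h₁nd.1 v
    intro w
    obtain ⟨u, hu⟩ := hsurj w
    have h := hv u
    have : ω₁ v w = c₁ * ω₁ v u + c₂ * ω₂ v u := by
      rw [← hu, hf]
      simp only [LinearMap.add_apply, LinearMap.smul_apply, LinearMap.id_coe, id_eq,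
        map_add, map_smul, smul_eq_mul, LinearEquiv.coe_coe]
      rw [hA]
    rw [this, h]
end
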